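/- If a point P does not lie in the convex hull of points A₁,…,A_{d+1} in ℝ^d and the d+2 points are in general position, then the intersection of the simplex ⟨A₁,…,A_{d+1}⟩ with the cone from P over any facet-complementary subset meets in at most one point: specifically, if I ⊔ J partitions {1,…,d+1} and the convex hull of {A_i : i ∈ I} meets the convex hull of {P} ∪ {A_j : j ∈ J}, the intersection is a single point. -/
import Mathlib

lemma mem_convexHull_image_iff_aux {ι : Type} [Fintype ι] {E : Type*} [AddCommGroup E]
    [Module ℝ E] {f : ι → E} (hf : Function.Injective f) (S : Set ι) (x : E) :
    x ∈ convexHull ℝ (f '' S) ↔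
      ∃ w : ι → ℝ, (∀ i, 0 ≤ w i) ∧ (∀ i, i ∉ S → w i = 0) ∧ ∑ i, w i = 1 ∧
        ∑ i, w i • f i = x := by
  classical
  set T : Finset ι := Finset.univ.filter (· ∈ S) with hT
  have hiT : ∀ i : ι, i ∈ T ↔ i ∈ S := by intro i; simp [hT]
  have hTS : (↑T : Set ι) = S := by ext i; simp [hT]
  have himg : f '' S = ↑(T.image f) := by rw [Finset.coe_image, hTS]
  constructor
  · intro hx
    rw [himg, Finset.convexHull_eq] at hx
    obtain ⟨w, hw0, hw1, hwx⟩ := hx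
    refine ⟨fun i => if i ∈ S then w (f i) else 0, ?_, ?_, ?_, ?_⟩
    · intro i
      by_cases hi : i ∈ S
      · simp only [hi, if_true]
        exact hw0 _ (Finset.mem_image.2 ⟨i, (hiT i).2 hi, rfl⟩)
      · simp [hi]
    · intro i hi; simp [hi]
    · rw [← Finset.sum_filter, ← hT, ← Finset.sum_image (fun a _ b _ h => hf h), hw1]
    · rw [Finset.centerMass_eq_of_sum_1 _ _ hw1] at hwx
      simp only [id_eq] at hwx
      simp only [ite_smul, zero_smul]
      rw [← Finset.sum_filter, ← hT,
        ← Finset.sum_image (f := fun y => w y • y) (fun a _ b _ h => hf h)]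
      exact hwx
  · rintro ⟨w, hw0, hwS, hw1, hwx⟩
    have hsub : ∑ i ∈ T, w i • f i = ∑ i, w i • f i := by
      refine Finset.sum_subset (Finset.subset_univ T) fun i _ hi => ?_
      rw [hwS i (fun h => hi ((hiT i).2 h)), zero_smul]
    have hsum : ∑ i ∈ T, w i = 1 := by
      rw [← hw1]
      refine Finset.sum_subset (Finset.subset_univ T) fun i _ hi =>
        hwS i (fun h => hi ((hiT i).2 h))
    have := T.centerMass_mem_convexHull (w := w) (z := f)
      (fun i _ => hw0 i) (by rw [hsum]; norm_num)
      (fun i hi => Set.mem_image_of_mem f ((hiT i).1 hi))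
    rwa [Finset.centerMass_eq_of_sum_1 _ _ hsum, hsub, hwx] at this

theorem cone_simplex_intersection_singleton (d : ℕ) (hd : 1 ≤ d)
    (P : Fin d → ℝ) (A : Fin (d + 1) → (Fin d → ℝ))
    (hgen : ∀ s : Finset (Fin (d + 2)), s.card = d + 1 →
      AffineIndependent ℝ (fun i : s => (Fin.cons P A : Fin (d + 2) → (Fin d → ℝ)) i))
    (hP : P ∉ convexHull ℝ (Set.range A))
    (I J : Set (Fin (d + 1))) (hdisj : I ∩ J = ∅) (hunion : I ∪ J = Set.univ)
    (hmeet : (convexHull ℝ (A '' I) ∩ convexHull ℝ ({P} ∪ A '' J)).Nonempty) :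
    ∃ x : Fin d → ℝ, convexHull ℝ (A '' I) ∩ convexHull ℝ ({P} ∪ A '' J) = {x} := by
  classical
  -- A is affinely independent
  have hA : AffineIndependent ℝ A := by
    have hcard : (Finset.univ.image (Fin.succ : Fin (d+1) → Fin (d+2))).card = d + 1 := by
      rw [Finset.card_image_of_injective _ (Fin.succ_injective _), Finset.card_univ,
        Fintype.card_fin]
    have h := hgen _ hcard
    have h2 := h.comp_embedding
      (⟨fun i => ⟨i.succ, Finset.mem_image_of_mem _ (Finset.mem_univ i)⟩,
        fun i j hij => Fin.succ_injective _ (by simpa [Subtype.ext_iff] using hij)⟩ :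
        Fin (d+1) ↪ ((Finset.univ.image (Fin.succ : Fin (d+1) → Fin (d+2)))
          : Finset (Fin (d+2))))
    exact h2
  have hPA : P ∉ Set.range A := fun ⟨i, hi⟩ =>
    hP (hi ▸ subset_convexHull ℝ _ (Set.mem_range_self i))
  have hgInj : Function.Injective (Fin.cons P A : Fin (d+2) → (Fin d → ℝ)) :=
    Fin.cons_injective_of_injective hPA hA.injective
  -- decomposition of the second hull's generating set
  have himg2 : ({P} ∪ A '' J : Set (Fin d → ℝ)) =
      (Fin.cons P A : Fin (d+2) → (Fin d → ℝ)) ''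
        ({0} ∪ (Fin.succ : Fin (d+1) → Fin (d+2)) '' J) := by
    have hcomp : (Fin.cons P A : Fin (d+2) → (Fin d → ℝ)) ∘ Fin.succ = A :=
      funext fun i => by simp
    rw [Set.image_union, Set.image_singleton, Fin.cons_zero, ← Set.image_comp, hcomp]
  have hIJ : ∀ i : Fin (d+1), i ∈ I → i ∉ J := fun i hI hJ =>
    Set.notMem_empty i (hdisj ▸ Set.mem_inter hI hJ)
  have hIJ' : ∀ i : Fin (d+1), i ∈ I ∨ i ∈ J := fun i => by
    have : i ∈ I ∪ J := by rw [hunion]; exact Set.mem_univ i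
    exact this
  -- representation of any point in the intersection
  have repr : ∀ z ∈ convexHull ℝ (A '' I) ∩ convexHull ℝ ({P} ∪ A '' J),
      ∃ (a b : Fin (d+1) → ℝ) (t : ℝ),
        (∀ i, i ∉ I → a i = 0) ∧ (∀ i, i ∉ J → b i = 0) ∧ (∑ i, a i) = 1 ∧
        t + (∑ i, b i) = 1 ∧ 0 < t ∧ (∑ i, a i • A i) = z ∧
        (∑ i, a i • A i) = t • P + ∑ i, b i • A i := by
    rintro z ⟨hz1, hz2⟩
    obtain ⟨a, ha0, haS, ha1, hax⟩ :=
      (mem_convexHull_image_iff_aux hA.injective I z).1 hz1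
    rw [himg2] at hz2
    obtain ⟨u, hu0, huS, hu1, hux⟩ :=
      (mem_convexHull_image_iff_aux hgInj ({0} ∪ (Fin.succ : Fin (d+1) → Fin (d+2)) '' J) z).1 hz2
    have hbS : ∀ j : Fin (d+1), j ∉ J → u j.succ = 0 := by
      intro j hj
      refine huS _ ?_
      rintro (h0 | ⟨j', hj', hj'e⟩)
      · exact Fin.succ_ne_zero j h0
      · exact hj (Fin.succ_injective _ hj'e ▸ hj')
    have hsum2 : u 0 + ∑ j : Fin (d+1), u j.succ = 1 := by
      rw [← hu1]; exact (Fin.sum_univ_succ u).symm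
    have hvec2 : (∑ j : Fin (d+1), u j.succ • A j) + u 0 • P = z := by
      rw [← hux, Fin.sum_univ_succ (f := fun i => u i • (Fin.cons P A : Fin (d+2) → _) i)]
      simp only [Fin.cons_zero, Fin.cons_succ]
      abel
    have ht0 : u 0 ≠ 0 := by
      intro ht
      have hb1 : ∑ j : Fin (d+1), u j.succ = 1 := by rw [ht, zero_add] at hsum2; exact hsum2
      have hvecs : ∑ i, a i • A i = ∑ i : Fin (d+1), u i.succ • A i := by
        rw [hax, ← hvec2, ht, zero_smul, add_zero]
      have hab := hA.eq_of_sum_eq_sum (s := Finset.univ) (w₁ := a)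
        (w₂ := fun i => u i.succ) (by rw [ha1, hb1]) hvecs
      have haz : ∀ i, a i = 0 := by
        intro i
        rcases hIJ' i with hi | hi
        · rw [hab i (Finset.mem_univ i)]; exact hbS i (hIJ i hi)
        · by_cases hiI : i ∈ I
          · rw [hab i (Finset.mem_univ i)]; exact hbS i (hIJ i hiI)
          · exact haS i hiI
      rw [Finset.sum_congr rfl fun i _ => haz i, Finset.sum_const, smul_zero] at ha1
      norm_num at ha1
    exact ⟨a, fun j => u j.succ, u 0, haS, hbS, ha1, hsum2,
      lt_of_le_of_ne (hu0 0) (Ne.symm ht0), hax, by rw [hax, ← hvec2]; abel⟩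
  obtain ⟨x, hx⟩ := hmeet
  refine ⟨x, Set.eq_singleton_iff_unique_mem.mpr ⟨hx, ?_⟩⟩
  intro y hy
  obtain ⟨a, b, t, haS, hbS, ha1, hb1, ht, hax, harel⟩ := repr x hx
  obtain ⟨a', b', t', haS', hbS', ha1', hb1', ht', hay, harel'⟩ := repr y hy
  set w : Fin (d+1) → ℝ := fun i => t' * a i - t * a' i - (t' * b i - t * b' i) with hwdef
  have hw_sum : ∑ i, w i = 0 := by
    simp only [hwdef, Finset.sum_sub_distrib, ← Finset.mul_sum, ha1, ha1']
    have hsb : ∑ i, b i = 1 - t := by linarith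
    have hsb' : ∑ i, b' i = 1 - t' := by linarith
    rw [hsb, hsb']; ring
  have hw_vec : ∑ i, w i • A i = 0 := by
    funext k
    have h1 := congrFun harel k
    have h2 := congrFun harel' k
    simp only [Finset.sum_apply, Pi.add_apply, Pi.smul_apply, smul_eq_mul] at h1 h2 ⊢
    have hexp : ∑ i, w i * A i k =
        t' * ∑ i, a i * A i k - t * ∑ i, a' i * A i k -
          (t' * ∑ i, b i * A i k - t * ∑ i, b' i * A i k) := by
      simp only [Finset.mul_sum, ← Finset.sum_sub_distrib]
      exact Finset.sum_congr rfl fun i _ => by simp only [hwdef]; ring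
    rw [hexp, h1, h2]
    simp only [Pi.zero_apply]
    ring
  have hwz := hA.eq_zero_of_sum_eq_zero hw_sum hw_vec
  have key : ∀ i, t' * a i = t * a' i := by
    intro i
    have hwi := hwz i (Finset.mem_univ i)
    rcases hIJ' i with hi | hi
    · have hb0 : b i = 0 := hbS i (hIJ i hi)
      have hb0' : b' i = 0 := hbS' i (hIJ i hi)
      simp only [hwdef, hb0, hb0'] at hwi
      linarith
    · by_cases hiI : i ∈ I
      · have hb0 : b i = 0 := hbS i (hIJ i hiI)
        have hb0' : b' i = 0 := hbS' i (hIJ i hiI)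
        simp only [hwdef, hb0, hb0'] at hwi
        linarith
      · have hiJ' : i ∉ I := hiI
        have h1 : a i = 0 := haS i hiJ'
        have h2 : a' i = 0 := haS' i hiJ'
        rw [h1, h2, mul_zero, mul_zero]
  have htt : t' = t := by
    have : ∑ i, t' * a i = ∑ i, t * a' i := Finset.sum_congr rfl fun i _ => key i
    rw [← Finset.mul_sum, ← Finset.mul_sum, ha1, ha1', mul_one, mul_one] at this
    exact this
  have haa : ∀ i, a i = a' i := fun i =>
    mul_left_cancel₀ (ne_of_gt ht) (by rw [← key i, htt])
  rw [← hay, ← hax]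
  exact Finset.sum_congr rfl fun i _ => by rw [haa i]
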